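/- Let n ≥ 1, let μ₁, …, μ_n > 0 be real numbers with partial sums a₀ = 0, a_i = μ₁ + ⋯ + μ_i, let λ₀, λ₁, …, λ_n > 0, and let c_{ij} ∈ ℂ (1 ≤ i ≤ n, 0 ≤ j < i) be arbitrary complex coefficients. For z ∈ ℂ \ {0} set P_i(z) = z^{a_i} + Σ_{j=0}^{i−1} c_{ij} z^{a_j} (principal complex powers), D(z) = λ₀ + Σ_{i=1}^n λ_i |P_i(z)|², and define the vector Θ(z) ∈ ℝ^{n²+2n} whose components are: ((λ_n/λ₀)|P_n(z)|² − 1)/D(z); ((λ_n/λ_i)|P_n(z)|² − |P_i(z)|²)/D(z) for i = 1, …, n−1; and, for each pair 0 ≤ j < i ≤ n, the two components −2λ_i Re( z^{a_j} conj(P_i(z)) )/D(z) and 2λ_i Im( z^{a_j} conj(P_i(z)) )/D(z). Then there exist points p₁, …, p_{n²+2n} ∈ ℂ \ {0} such that the (n²+2n)×(n²+2n) real matrix M = (Θ(p₁), …, Θ(p_{n²+2n})) is invertible. -/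

import Mathlib

open Finset Complex

open Matrix in
lemma exists_points_det_ne_zero {ι X : Type*} [Fintype ι] [DecidableEq ι]
    (S : Set X) (g : ι → X → ℝ)
    (h : ∀ α : ι → ℝ, (∀ x ∈ S, ∑ i, α i * g i x = 0) → α = 0) :
    ∃ p : ι → X, (∀ t, p t ∈ S) ∧ (Matrix.of fun r t => g r (p t)).det ≠ 0 := by
  classical
  set s : Set (ι → ℝ) := {v | ∃ x ∈ S, v = fun i => g i x} with hs
  have hspan : Submodule.span ℝ s = ⊤ := by
    by_contra hne
    obtain ⟨f, hf0, hfbot⟩ := Submodule.exists_dual_map_eq_bot_of_lt_top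
      (lt_top_iff_ne_top.2 hne) inferInstance
    set α : ι → ℝ := fun i => f (fun j => if i = j then 1 else 0) with hα
    have hαz : α = 0 := by
      refine h α fun x hx => ?_
      have hv : (fun i => g i x) ∈ Submodule.span ℝ s :=
        Submodule.subset_span ⟨x, hx, rfl⟩
      have : f (fun i => g i x) = 0 := by
        have := Submodule.mem_map_of_mem (f := f) hv
        rw [hfbot] at this
        simpa using this
      rw [LinearMap.pi_apply_eq_sum_univ f (fun i => g i x)] at this
      simpa [mul_comm] using this
    have hαz' : ∀ x, f (fun j => if x = j then 1 else 0) = 0 := fun x => congrFun hαz x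
    apply hf0
    apply LinearMap.ext
    intro v
    rw [LinearMap.pi_apply_eq_sum_univ f v]
    simp [hαz']
  obtain ⟨b, hbs, hbspan, hbli⟩ := exists_linearIndependent ℝ s
  rw [hspan] at hbspan
  let B : Module.Basis b ℝ (ι → ℝ) := Module.Basis.mk hbli (by rw [Subtype.range_coe, hbspan])
  have : FiniteDimensional ℝ (ι → ℝ) := inferInstance
  have : Fintype b := FiniteDimensional.fintypeBasisIndex B
  have hcard : Fintype.card b = Fintype.card ι := by
    have := Module.finrank_eq_card_basis B
    rw [Module.finrank_fintype_fun_eq_card] at this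
    exact this.symm
  let e : ι ≃ b := (Fintype.equivOfCardEq hcard).symm
  have hsel : ∀ t : ι, ∃ x ∈ S, ((e t : ι → ℝ)) = fun i => g i x := fun t => (hbs (e t).2)
  choose p hpS hpv using hsel
  refine ⟨p, hpS, ?_⟩
  set M : Matrix ι ι ℝ := Matrix.of fun r t => g r (p t) with hMdef
  have hM : IsUnit M := by
    rw [← Matrix.linearIndependent_cols_iff_isUnit]
    have heq : (fun t : ι => Mᵀ t) = fun t : ι => (e t : ι → ℝ) := by
      funext t
      rw [hpv t]
      rfl
    rw [show M.col = (fun t : ι => Mᵀ t) from rfl, heq]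
    exact hbli.comp (fun t => e t) (fun t t' htt => e.injective htt)
  exact ((Matrix.isUnit_iff_isUnit_det _).1 hM).ne_zero

lemma exists_real_exp_ne_one {d : ℂ} (hd : d ≠ 0) : ∃ x : ℝ, Complex.exp (d * x) ≠ 1 := by
  set r : ℝ := ‖d‖ with hr
  have hrpos : 0 < r := norm_pos_iff.2 hd
  refine ⟨1 / r, fun h => ?_⟩
  obtain ⟨k, hk⟩ := Complex.exp_eq_one_iff.1 h
  have habs : ‖d * ((1 / r : ℝ) : ℂ)‖ = 1 := by
    rw [norm_mul, Complex.norm_real, Real.norm_of_nonneg (by positivity)]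
    field_simp
    exact hr.symm
  rw [hk] at habs
  have habs2 : ‖(k : ℂ) * (2 * (Real.pi : ℂ) * I)‖ = |(k : ℝ)| * (2 * Real.pi) := by
    simp [norm_mul, Complex.norm_intCast, Complex.norm_real,
      _root_.abs_of_nonneg Real.pi_pos.le]
  rw [habs2] at habs
  rcases eq_or_ne k 0 with rfl | hk0
  · simp at habs
  · have h1 : (1 : ℝ) ≤ |(k : ℝ)| := by exact_mod_cast Int.one_le_abs hk0
    have h2 : (6 : ℝ) < 2 * Real.pi := by have := Real.pi_gt_three; linarith
    nlinarith

/-- Linear independence of `x ↦ exp (w x)` on the real line, family form. -/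
lemma indep_exp_line {ι : Type*} [DecidableEq ι] (s : Finset ι) (wf : ι → ℂ)
    (hinj : Set.InjOn wf s) (cf : ι → ℂ)
    (h : ∀ x : ℝ, ∑ i ∈ s, cf i * Complex.exp (wf i * x) = 0) :
    ∀ i ∈ s, cf i = 0 := by
  classical
  induction s using Finset.strongInduction generalizing cf with
  | _ s ih =>
    rcases s.eq_empty_or_nonempty with rfl | ⟨i₀, hi₀⟩
    · intro i hi; simp at hi
    · have key : ∀ i ∈ s.erase i₀, cf i = 0 := by
        intro i hi
        have hine : wf i ≠ wf i₀ := by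
          intro hw
          exact (Finset.ne_of_mem_erase hi) (hinj (Finset.mem_of_mem_erase hi) hi₀ hw)
        obtain ⟨x₀, hx₀⟩ := exists_real_exp_ne_one (sub_ne_zero.2 hine)
        have hrec : ∀ x : ℝ, ∑ j ∈ s.erase i₀,
            (cf j * (Complex.exp (wf j * x₀) - Complex.exp (wf i₀ * x₀)))
              * Complex.exp (wf j * x) = 0 := by
          intro x
          have h1 := h (x + x₀)
          have h2 := h x
          have e1 : ∑ j ∈ s, cf j * Complex.exp (wf j * x₀) * Complex.exp (wf j * x) = 0 := by
            rw [← h1]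
            refine Finset.sum_congr rfl fun j _ => ?_
            rw [show wf j * ((x + x₀ : ℝ) : ℂ) = wf j * x₀ + wf j * x by push_cast; ring,
              Complex.exp_add]
            ring
          have e2 : ∑ j ∈ s, cf j * Complex.exp (wf i₀ * x₀) * Complex.exp (wf j * x) = 0 := by
            have := congrArg (fun t => Complex.exp (wf i₀ * x₀) * t) h2
            simp only [Finset.mul_sum, mul_zero] at this
            rw [← this]
            exact Finset.sum_congr rfl fun j _ => by ring
          have e3 : ∑ j ∈ s, (cf j * (Complex.exp (wf j * x₀) - Complex.exp (wf i₀ * x₀)))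
              * Complex.exp (wf j * x) = 0 := by
            have := sub_eq_zero.2 (e1.trans e2.symm)
            rw [← Finset.sum_sub_distrib] at this
            rw [← this]
            refine Finset.sum_congr rfl fun j _ => ?_
            ring
          have e4 : ∑ j ∈ s.erase i₀,
              (cf j * (Complex.exp (wf j * x₀) - Complex.exp (wf i₀ * x₀)))
                * Complex.exp (wf j * x)
              = ∑ j ∈ s, (cf j * (Complex.exp (wf j * x₀) - Complex.exp (wf i₀ * x₀)))
                * Complex.exp (wf j * x) :=
            Finset.sum_erase s (by simp)
          rw [e4]
          exact e3
        have := ih (s.erase i₀) (Finset.erase_ssubset hi₀)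
          (hinj.mono (fun x hx => Finset.mem_of_mem_erase hx))
          _ hrec i hi
        rcases mul_eq_zero.1 this with hc | hc
        · exact hc
        · exfalso
          apply hx₀
          rw [sub_mul, Complex.exp_sub, sub_eq_zero.1 hc, div_self (Complex.exp_ne_zero _)]
      intro i hi
      rcases eq_or_ne i i₀ with rfl | hne
      · have h0 := h 0
        simp only [Complex.ofReal_zero, mul_zero, Complex.exp_zero, mul_one] at h0
        rw [← Finset.add_sum_erase s cf hi] at h0
        rw [Finset.sum_eq_zero key, add_zero] at h0
        exact h0
      · exact key i (Finset.mem_erase.2 ⟨hne, hi⟩)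

/-- Linear independence of `x ↦ exp (w x)` on `(-π, π)`. -/
lemma indep_exp_Ioo {ι : Type*} [DecidableEq ι] (s : Finset ι) (wf : ι → ℂ)
    (hinj : Set.InjOn wf s) (cf : ι → ℂ)
    (h : ∀ x : ℝ, x ∈ Set.Ioo (-Real.pi) Real.pi →
      ∑ i ∈ s, cf i * Complex.exp (wf i * x) = 0) :
    ∀ i ∈ s, cf i = 0 := by
  set g : ℂ → ℂ := fun ζ => ∑ i ∈ s, cf i * Complex.exp (wf i * ζ) with hg
  have hdiff : Differentiable ℂ g := by
    refine Differentiable.fun_sum fun i _ => ?_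
    exact (differentiable_const (cf i)).mul (((differentiable_const (wf i)).mul
      differentiable_id).cexp)
  have hana : AnalyticOnNhd ℂ g Set.univ := Complex.analyticOnNhd_univ_iff_differentiable.2 hdiff
  have hfreq : ∃ᶠ z in nhdsWithin (0 : ℂ) {(0:ℂ)}ᶜ, g z = 0 := by
    rw [Filter.frequently_iff]
    intro U hU
    obtain ⟨ε, hε, hball⟩ := Metric.mem_nhdsWithin_iff.1 hU
    set x : ℝ := min (ε / 2) 1 with hx
    have hx0 : 0 < x := lt_min (by linarith) (by norm_num)
    have hxπ : x < Real.pi := lt_of_le_of_lt (min_le_right _ _)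
      (by have := Real.pi_gt_three; linarith)
    refine ⟨(x : ℂ), hball ⟨?_, ?_⟩, ?_⟩
    · rw [Metric.mem_ball]
      have : ‖(x : ℂ) - 0‖ = x := by
        simp [abs_of_pos hx0]
      rw [Complex.dist_eq, this]
      exact lt_of_le_of_lt (min_le_left _ _) (by linarith)
    · simp only [Set.mem_compl_iff, Set.mem_singleton_iff]
      exact_mod_cast ne_of_gt hx0
    · exact h x ⟨by linarith, hxπ⟩
  have hzero : Set.EqOn g 0 Set.univ :=
    hana.eqOn_zero_of_preconnected_of_frequently_eq_zero isPreconnected_univ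
      (Set.mem_univ 0) hfreq
  exact indep_exp_line s wf hinj cf fun x => hzero (Set.mem_univ (x : ℂ))

/-- Two-variable independence: `exp (s u + i t θ)` for distinct `(s, t)` pairs,
with `u` ranging over `ℝ` and `θ` over `(-π, π)`. -/
lemma indep_exp_two {ι : Type*} [DecidableEq ι] (s : Finset ι) (sf tf : ι → ℝ)
    (hinj : Set.InjOn (fun i => (sf i, tf i)) s) (cf : ι → ℂ)
    (h : ∀ u θ : ℝ, θ ∈ Set.Ioo (-Real.pi) Real.pi →
      ∑ i ∈ s, cf i * Complex.exp ((sf i : ℂ) * u + Complex.I * (tf i : ℂ) * θ) = 0) :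
    ∀ i ∈ s, cf i = 0 := by
  classical
  intro i₀ hi₀
  -- Step 1: group by the value of `sf`, use line independence in `u`.
  have step1 : ∀ θ : ℝ, θ ∈ Set.Ioo (-Real.pi) Real.pi → ∀ r : ℝ,
      ∑ i ∈ s.filter (fun i => sf i = r),
        cf i * Complex.exp (Complex.I * (tf i : ℂ) * θ) = 0 := by
    intro θ hθ r
    by_cases hrmem : r ∈ s.image sf
    · refine indep_exp_line (s.image sf) (fun r => (r : ℂ))
        (fun x _ y _ hxy => Complex.ofReal_injective (by simpa using hxy))
        (fun r => ∑ i ∈ s.filter (fun i => sf i = r),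
          cf i * Complex.exp (Complex.I * (tf i : ℂ) * θ))
        (fun u => ?_) r hrmem
      rw [show (0 : ℂ) = ∑ i ∈ s,
        cf i * Complex.exp ((sf i : ℂ) * u + Complex.I * (tf i : ℂ) * θ) from (h u θ hθ).symm]
      rw [← Finset.sum_fiberwise_of_maps_to (fun i hi => Finset.mem_image_of_mem sf hi)
        (fun i => cf i * Complex.exp ((sf i : ℂ) * u + Complex.I * (tf i : ℂ) * θ))]
      refine Finset.sum_congr rfl fun r _ => ?_
      rw [Finset.sum_mul]
      refine Finset.sum_congr rfl fun i hi => ?_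
      have hsfi : sf i = r := (Finset.mem_filter.1 hi).2
      rw [← hsfi, Complex.exp_add]
      ring
    · have : s.filter (fun i => sf i = r) = ∅ := by
        rw [Finset.filter_eq_empty_iff]
        intro i hi hsf
        exact hrmem (hsf ▸ Finset.mem_image_of_mem sf hi)
      simp [this]
  -- Step 2: within the fiber of `sf i₀`, use interval independence in `θ`.
  have step2 := indep_exp_Ioo (s.filter (fun i => sf i = sf i₀))
    (fun i => Complex.I * (tf i : ℂ))
    (fun x hx y hy hxy => by
      have hx' := Finset.mem_filter.1 hx
      have hy' := Finset.mem_filter.1 hy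
      have htf : tf x = tf y := by
        have := mul_left_cancel₀ Complex.I_ne_zero hxy
        exact_mod_cast this
      exact hinj hx'.1 hy'.1 (by rw [Prod.mk.injEq]; exact ⟨hx'.2.trans hy'.2.symm, htf⟩))
    cf
    (fun θ hθ => step1 θ hθ (sf i₀))
  exact step2 i₀ (Finset.mem_filter.2 ⟨hi₀, rfl⟩)

/-- Index type with `n² + 2n` elements: `n` indices for the `λ`-derivative components, and,
for each pair `0 ≤ j < i ≤ n`, two indices (a real-part one, `false`, and an
imaginary-part one, `true`). -/
abbrev TodaIdx (n : ℕ) :=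
  Fin n ⊕ ({q : Fin (n + 1) × Fin (n + 1) // q.1 < q.2} × Bool)

noncomputable def alphaN (n : ℕ) (α : TodaIdx n → ℝ) : ℕ → ℝ :=
  fun k => if h : k < n then α (Sum.inl ⟨k, h⟩) else 0

noncomputable def betaN (n : ℕ) (α : TodaIdx n → ℝ) : ℕ → ℕ → ℝ := fun j i =>
  if h : j < i ∧ i ≤ n then
    α (Sum.inr (⟨(⟨j, by omega⟩, ⟨i, by omega⟩), Fin.mk_lt_mk.2 h.1⟩, false)) else 0

noncomputable def gammaN (n : ℕ) (α : TodaIdx n → ℝ) : ℕ → ℕ → ℝ := fun j i =>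
  if h : j < i ∧ i ≤ n then
    α (Sum.inr (⟨(⟨j, by omega⟩, ⟨i, by omega⟩), Fin.mk_lt_mk.2 h.1⟩, true)) else 0

noncomputable def LamN (n : ℕ) (lam : ℕ → ℝ) (α : TodaIdx n → ℝ) : ℕ → ℝ := fun i =>
  if i = n then ∑ k ∈ Finset.range n, alphaN n α k * (lam n / lam k) else -alphaN n α i

noncomputable def kappaN (n : ℕ) (lam : ℕ → ℝ) (α : TodaIdx n → ℝ) : ℕ → ℕ → ℂ := fun j i =>
  (-2 * (lam i : ℂ)) * ((betaN n α j i : ℂ) + Complex.I * (gammaN n α j i : ℂ))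

noncomputable def ccN (c : ℕ → ℕ → ℂ) : ℕ → ℕ → ℂ := fun i j => if j = i then 1 else c i j

noncomputable def CN (n : ℕ) (lam : ℕ → ℝ) (c : ℕ → ℕ → ℂ) (α : TodaIdx n → ℝ) :
    ℕ → ℕ → ℂ := fun j l =>
  (∑ i ∈ Finset.Icc 1 n,
      if j ≤ i ∧ l ≤ i then (LamN n lam α i : ℂ) * ccN c i j * (starRingEnd ℂ) (ccN c i l)
      else 0)
    + (if j = 0 ∧ l = 0 then (-(alphaN n α 0) : ℂ) else 0)
    + (∑ i ∈ Finset.Icc 1 n,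
        if j < i ∧ l ≤ i then kappaN n lam α j i * (starRingEnd ℂ) (ccN c i l) else 0)

lemma hPcc (a : ℕ → ℝ) (c : ℕ → ℕ → ℂ) (P : ℂ → ℕ → ℂ)
    (hP : ∀ z k, P z k = z ^ (a k : ℂ) + ∑ j ∈ Finset.range k, c k j * z ^ (a j : ℂ))
    (z : ℂ) (i : ℕ) :
    P z i = ∑ j ∈ Finset.range (i + 1), ccN c i j * z ^ (a j : ℂ) := by
  rw [hP, Finset.sum_range_succ]
  have h1 : ccN c i i = 1 := by simp [ccN]
  have h2 : ∀ j ∈ Finset.range i, ccN c i j * z ^ (a j : ℂ) = c i j * z ^ (a j : ℂ) := by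
    intro j hj
    have hji : j ≠ i := by have := Finset.mem_range.1 hj; omega
    simp [ccN, hji]
  rw [Finset.sum_congr rfl h2, h1, one_mul, add_comm]

/-- Splitting a sum over `TodaIdx n` into ℕ-indexed pieces. -/
lemma toda_sum_split (n : ℕ) (F : TodaIdx n → ℝ) (G0 : ℕ → ℝ) (G : ℕ → ℕ → Bool → ℝ)
    (hL : ∀ k : Fin n, F (Sum.inl k) = G0 k.val)
    (hG : ∀ (q : {q : Fin (n + 1) × Fin (n + 1) // q.1 < q.2}) (b : Bool),
      F (Sum.inr (q, b)) = G q.1.1.val q.1.2.val b) :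
    ∑ r, F r = (∑ k ∈ Finset.range n, G0 k)
      + ∑ i ∈ Finset.Icc 1 n, ∑ j ∈ Finset.range i, (G j i false + G j i true) := by
  classical
  rw [Fintype.sum_sum_type]
  congr 1
  · rw [← Fin.sum_univ_eq_sum_range G0 n]
    exact Finset.sum_congr rfl fun k _ => hL k
  · rw [Fintype.sum_prod_type]
    have h1 : ∀ q : {q : Fin (n + 1) × Fin (n + 1) // q.1 < q.2},
        ∑ b : Bool, F (Sum.inr (q, b))
          = G q.1.1.val q.1.2.val false + G q.1.1.val q.1.2.val true := by
      intro q
      rw [Fintype.sum_bool, hG q true, hG q false, add_comm]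
    rw [Finset.sum_congr rfl fun q _ => h1 q]
    rw [← Finset.sum_sigma (Finset.Icc 1 n) (fun i => Finset.range i)
      (fun x => G x.2 x.1 false + G x.2 x.1 true)]
    refine Finset.sum_bij' (fun q _ => (⟨q.1.2.val, q.1.1.val⟩ : Σ _ : ℕ, ℕ))
      (fun x hx => ⟨(⟨x.2, by
          have h0 := Finset.mem_sigma.1 hx
          have h2 := Finset.mem_Icc.1 h0.1
          have h3 := Finset.mem_range.1 h0.2
          omega⟩, ⟨x.1, by
          have h0 := Finset.mem_sigma.1 hx
          have h2 := Finset.mem_Icc.1 h0.1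
          omega⟩), by
          have h0 := Finset.mem_sigma.1 hx
          exact Fin.mk_lt_mk.2 (Finset.mem_range.1 h0.2)⟩) ?_ ?_ ?_ ?_ ?_
    · intro q _
      have h2 : q.1.1.val < q.1.2.val := q.2
      have h3 : q.1.2.val < n + 1 := q.1.2.isLt
      have e1 : 1 ≤ q.1.2.val := by omega
      have e2 : q.1.2.val ≤ n := by omega
      exact Finset.mem_sigma.2 ⟨Finset.mem_Icc.2 ⟨e1, e2⟩, Finset.mem_range.2 h2⟩
    · intro x _
      exact Finset.mem_univ _
    · intro q _
      apply Subtype.ext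
      apply Prod.ext <;> simp
    · intro x hx
      rfl
    · intro q _
      rfl

lemma toda_expand (n : ℕ) (hn : 1 ≤ n) (a : ℕ → ℝ) (ha0 : a 0 = 0)
    (lam : ℕ → ℝ) (c : ℕ → ℕ → ℂ) (α : TodaIdx n → ℝ)
    (P : ℂ → ℕ → ℂ)
    (hP : ∀ z k, P z k = z ^ (a k : ℂ) + ∑ j ∈ Finset.range k, c k j * z ^ (a j : ℂ))
    (z : ℂ) :
    (∑ q ∈ (Finset.range (n+1)) ×ˢ (Finset.range (n+1)),
        CN n lam c α q.1 q.2 * (z ^ (a q.1 : ℂ) * (starRingEnd ℂ) (z ^ (a q.2 : ℂ)))).re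
    = (∑ k ∈ Finset.range n, alphaN n α k *
          (lam n / lam k * ‖P z n‖ ^ 2
            - (if k = 0 then 1 else ‖P z k‖ ^ 2)))
      + ∑ i ∈ Finset.Icc 1 n, ∑ j ∈ Finset.range i,
          (betaN n α j i * (-2 * lam i * (z ^ (a j : ℂ) * (starRingEnd ℂ) (P z i)).re)
            + gammaN n α j i * (2 * lam i * (z ^ (a j : ℂ) * (starRingEnd ℂ) (P z i)).im)) := by
  classical
  set Q := (Finset.range (n+1)) ×ˢ (Finset.range (n+1)) with hQ
  set E : ℕ → ℕ → ℂ := fun j l => z ^ (a j : ℂ) * (starRingEnd ℂ) (z ^ (a l : ℂ)) with hE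
  -- split the sum into three parts
  have hsplit : ∑ q ∈ Q, CN n lam c α q.1 q.2 * E q.1 q.2
      = (∑ q ∈ Q, (∑ i ∈ Finset.Icc 1 n,
            if q.1 ≤ i ∧ q.2 ≤ i then
              (LamN n lam α i : ℂ) * ccN c i q.1 * (starRingEnd ℂ) (ccN c i q.2)
            else 0) * E q.1 q.2)
        + (∑ q ∈ Q, (if q.1 = 0 ∧ q.2 = 0 then (-(alphaN n α 0) : ℂ) else 0) * E q.1 q.2)
        + (∑ q ∈ Q, (∑ i ∈ Finset.Icc 1 n,
            if q.1 < i ∧ q.2 ≤ i then kappaN n lam α q.1 i * (starRingEnd ℂ) (ccN c i q.2)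
            else 0) * E q.1 q.2) := by
    rw [← Finset.sum_add_distrib, ← Finset.sum_add_distrib]
    refine Finset.sum_congr rfl fun q _ => ?_
    simp only [CN]
    ring
  -- Part 1
  have hpart1 : (∑ q ∈ Q, (∑ i ∈ Finset.Icc 1 n,
        if q.1 ≤ i ∧ q.2 ≤ i then
          (LamN n lam α i : ℂ) * ccN c i q.1 * (starRingEnd ℂ) (ccN c i q.2)
        else 0) * E q.1 q.2)
      = ∑ i ∈ Finset.Icc 1 n, (LamN n lam α i : ℂ) * (P z i * (starRingEnd ℂ) (P z i)) := by
    have e1 : ∀ q ∈ Q, (∑ i ∈ Finset.Icc 1 n,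
        if q.1 ≤ i ∧ q.2 ≤ i then
          (LamN n lam α i : ℂ) * ccN c i q.1 * (starRingEnd ℂ) (ccN c i q.2)
        else 0) * E q.1 q.2
        = ∑ i ∈ Finset.Icc 1 n,
          (if q.1 ≤ i ∧ q.2 ≤ i then
            (LamN n lam α i : ℂ) * ccN c i q.1 * (starRingEnd ℂ) (ccN c i q.2) * E q.1 q.2
          else 0) := by
      intro q _
      rw [Finset.sum_mul]
      exact Finset.sum_congr rfl fun i _ => by rw [ite_mul, zero_mul]
    rw [Finset.sum_congr rfl e1, Finset.sum_comm]
    refine Finset.sum_congr rfl fun i hi => ?_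
    have hin : i ≤ n := (Finset.mem_Icc.1 hi).2
    have hfil : Q.filter (fun q : ℕ × ℕ => q.1 ≤ i ∧ q.2 ≤ i)
        = (Finset.range (i+1)) ×ˢ (Finset.range (i+1)) := by
      ext q
      simp only [hQ, Finset.mem_filter, Finset.mem_product, Finset.mem_range]
      omega
    rw [← Finset.sum_filter, hfil, Finset.sum_product]
    have e3 : (LamN n lam α i : ℂ) * (P z i * (starRingEnd ℂ) (P z i))
        = ∑ j ∈ Finset.range (i+1), ∑ l ∈ Finset.range (i+1),
            (LamN n lam α i : ℂ) * ccN c i j * (starRingEnd ℂ) (ccN c i l) * E j l := by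
      rw [hPcc a c P hP z i, map_sum, Finset.sum_mul_sum, Finset.mul_sum]
      refine Finset.sum_congr rfl fun j _ => ?_
      rw [Finset.mul_sum]
      refine Finset.sum_congr rfl fun l _ => ?_
      rw [map_mul]
      simp only [hE]
      ring
    rw [e3]
  -- Part 2
  have hpart2 : (∑ q ∈ Q, (if q.1 = 0 ∧ q.2 = 0 then (-(alphaN n α 0) : ℂ) else 0) * E q.1 q.2)
      = (-(alphaN n α 0) : ℂ) := by
    have h00 : ((0, 0) : ℕ × ℕ) ∈ Q := by
      simp only [hQ, Finset.mem_product, Finset.mem_range]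
      omega
    rw [Finset.sum_eq_single_of_mem (0, 0) h00 (fun q hq hne => ?_)]
    · have hE00 : E 0 0 = 1 := by
        simp only [hE, ha0, Complex.ofReal_zero, Complex.cpow_zero, map_one, mul_one]
      simp [hE00]
    · have : ¬(q.1 = 0 ∧ q.2 = 0) := by
        intro hc
        exact hne (Prod.ext hc.1 hc.2)
      rw [if_neg this, zero_mul]
  -- Part 3
  have hpart3 : (∑ q ∈ Q, (∑ i ∈ Finset.Icc 1 n,
        if q.1 < i ∧ q.2 ≤ i then kappaN n lam α q.1 i * (starRingEnd ℂ) (ccN c i q.2)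
        else 0) * E q.1 q.2)
      = ∑ i ∈ Finset.Icc 1 n, ∑ j ∈ Finset.range i,
          kappaN n lam α j i * (z ^ (a j : ℂ) * (starRingEnd ℂ) (P z i)) := by
    have e1 : ∀ q ∈ Q, (∑ i ∈ Finset.Icc 1 n,
        if q.1 < i ∧ q.2 ≤ i then kappaN n lam α q.1 i * (starRingEnd ℂ) (ccN c i q.2)
        else 0) * E q.1 q.2
        = ∑ i ∈ Finset.Icc 1 n,
          (if q.1 < i ∧ q.2 ≤ i then
            kappaN n lam α q.1 i * (starRingEnd ℂ) (ccN c i q.2) * E q.1 q.2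
          else 0) := by
      intro q _
      rw [Finset.sum_mul]
      exact Finset.sum_congr rfl fun i _ => by rw [ite_mul, zero_mul]
    rw [Finset.sum_congr rfl e1, Finset.sum_comm]
    refine Finset.sum_congr rfl fun i hi => ?_
    have hin : i ≤ n := (Finset.mem_Icc.1 hi).2
    have hfil : Q.filter (fun q : ℕ × ℕ => q.1 < i ∧ q.2 ≤ i)
        = (Finset.range i) ×ˢ (Finset.range (i+1)) := by
      ext q
      simp only [hQ, Finset.mem_filter, Finset.mem_product, Finset.mem_range]
      omega
    rw [← Finset.sum_filter, hfil, Finset.sum_product]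
    refine Finset.sum_congr rfl fun j _ => ?_
    rw [hPcc a c P hP z i, map_sum, Finset.mul_sum, Finset.mul_sum]
    refine Finset.sum_congr rfl fun l _ => ?_
    rw [map_mul]
    simp only [hE]
    ring
  rw [hsplit, hpart1, hpart2, hpart3]
  rw [Complex.add_re, Complex.add_re, Complex.re_sum, Complex.re_sum]
  have f1 : ∀ i ∈ Finset.Icc 1 n,
      ((LamN n lam α i : ℂ) * (P z i * (starRingEnd ℂ) (P z i))).re
        = LamN n lam α i * ‖P z i‖ ^ 2 := by
    intro i _
    rw [Complex.mul_conj, ← Complex.ofReal_mul, Complex.ofReal_re, Complex.sq_norm]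
  have f3 : ∀ i ∈ Finset.Icc 1 n,
      (∑ j ∈ Finset.range i,
        kappaN n lam α j i * (z ^ (a j : ℂ) * (starRingEnd ℂ) (P z i))).re
      = ∑ j ∈ Finset.range i,
          (betaN n α j i * (-2 * lam i * (z ^ (a j : ℂ) * (starRingEnd ℂ) (P z i)).re)
            + gammaN n α j i * (2 * lam i * (z ^ (a j : ℂ) * (starRingEnd ℂ) (P z i)).im)) := by
    intro i _
    rw [Complex.re_sum]
    refine Finset.sum_congr rfl fun j _ => ?_
    simp only [kappaN, Complex.mul_re, Complex.mul_im, Complex.add_re, Complex.add_im,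
      Complex.I_re, Complex.I_im, Complex.ofReal_re, Complex.ofReal_im, Complex.neg_re,
      Complex.neg_im, Complex.re_ofNat, Complex.im_ofNat]
    ring
  rw [Finset.sum_congr rfl f1, Finset.sum_congr rfl f3]
  have f2 : (-(alphaN n α 0) : ℂ).re = -(alphaN n α 0) := by
    simp
  rw [f2]
  have hrearr : (∑ i ∈ Finset.Icc 1 n, LamN n lam α i * ‖P z i‖ ^ 2)
        + -(alphaN n α 0)
      = ∑ k ∈ Finset.range n, alphaN n α k *
          (lam n / lam k * ‖P z n‖ ^ 2
            - (if k = 0 then 1 else ‖P z k‖ ^ 2)) := by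
    have h1 : Finset.Icc 1 n = insert n (Finset.Ico 1 n) := by
      ext x
      simp only [Finset.mem_Icc, Finset.mem_insert, Finset.mem_Ico]
      omega
    have h2 : Finset.range n = insert 0 (Finset.Ico 1 n) := by
      ext x
      simp only [Finset.mem_range, Finset.mem_insert, Finset.mem_Ico]
      omega
    have hnotin1 : n ∉ Finset.Ico 1 n := by simp
    have hnotin2 : (0 : ℕ) ∉ Finset.Ico 1 n := by simp
    rw [h1, Finset.sum_insert hnotin1, h2, Finset.sum_insert hnotin2]
    have hLn : LamN n lam α n = ∑ k ∈ Finset.range n, alphaN n α k * (lam n / lam k) :=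
      if_pos rfl
    rw [hLn, h2, Finset.sum_insert hnotin2]
    have hLam : ∀ i ∈ Finset.Ico 1 n, LamN n lam α i * ‖P z i‖ ^ 2
        = -(alphaN n α i * ‖P z i‖ ^ 2) := by
      intro i hi
      have : i ≠ n := by have := (Finset.mem_Ico.1 hi).2; omega
      rw [show LamN n lam α i = -alphaN n α i from if_neg this]
      ring
    rw [Finset.sum_congr rfl hLam, Finset.sum_neg_distrib]
    have hite : ∀ k ∈ Finset.Ico 1 n, alphaN n α k *
        (lam n / lam k * ‖P z n‖ ^ 2
          - (if k = 0 then 1 else ‖P z k‖ ^ 2))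
        = alphaN n α k * (lam n / lam k) * ‖P z n‖ ^ 2
          - alphaN n α k * ‖P z k‖ ^ 2 := by
      intro k hk
      have : k ≠ 0 := by have := (Finset.mem_Ico.1 hk).1; omega
      rw [if_neg this]
      ring
    rw [Finset.sum_congr rfl hite, Finset.sum_sub_distrib, if_pos rfl, add_mul,
      Finset.sum_mul]
    ring
  rw [← hrearr]

lemma toda_alpha_eq_zero (n : ℕ) (hn : 1 ≤ n) (lam : ℕ → ℝ) (hlam : ∀ i, i ≤ n → 0 < lam i)
    (c : ℕ → ℕ → ℂ) (α : TodaIdx n → ℝ)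
    (hC : ∀ j l, j ≤ n → l ≤ n →
      CN n lam c α j l + (starRingEnd ℂ) (CN n lam c α l j) = 0) :
    α = 0 := by
  classical
  have hcc1 : ∀ i, ccN c i i = 1 := fun i => by simp [ccN]
  -- the downward induction step
  have step : ∀ i, 1 ≤ i → i ≤ n →
      (∀ i', i < i' → i' ≤ n →
        LamN n lam α i' = 0 ∧ ∀ j, j < i' → kappaN n lam α j i' = 0) →
      LamN n lam α i = 0 ∧ ∀ j, j < i → kappaN n lam α j i = 0 := by
    intro i h1 hin H
    have himem : i ∈ Finset.Icc 1 n := Finset.mem_Icc.2 ⟨h1, hin⟩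
    -- diagonal entry
    have hCii : CN n lam c α i i = ((LamN n lam α i : ℝ) : ℂ) := by
      have s1 : (∑ i' ∈ Finset.Icc 1 n,
          if i ≤ i' ∧ i ≤ i' then
            (LamN n lam α i' : ℂ) * ccN c i' i * (starRingEnd ℂ) (ccN c i' i)
          else 0) = ((LamN n lam α i : ℝ) : ℂ) := by
        rw [Finset.sum_eq_single_of_mem i himem]
        · rw [if_pos ⟨le_refl i, le_refl i⟩, hcc1 i]
          simp
        · intro i' hi' hne
          rcases le_or_gt i i' with hle | hlt
          · have : i < i' := lt_of_le_of_ne hle (Ne.symm hne)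
            rw [if_pos ⟨le_of_lt this, le_of_lt this⟩,
              (H i' this (Finset.mem_Icc.1 hi').2).1]
            simp
          · rw [if_neg (by omega)]
      have s2 : (if i = 0 ∧ i = 0 then (-(alphaN n α 0) : ℂ) else 0) = 0 :=
        if_neg (by omega)
      have s3 : (∑ i' ∈ Finset.Icc 1 n,
          if i < i' ∧ i ≤ i' then kappaN n lam α i i' * (starRingEnd ℂ) (ccN c i' i)
          else 0) = 0 := by
        refine Finset.sum_eq_zero fun i' hi' => ?_
        rcases lt_or_ge i i' with hlt | hle
        · rw [if_pos ⟨hlt, le_of_lt hlt⟩, (H i' hlt (Finset.mem_Icc.1 hi').2).2 i hlt]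
          simp
        · rw [if_neg (by omega)]
      rw [CN, s1, s2, s3, add_zero, add_zero]
    have hLi : LamN n lam α i = 0 := by
      have := hC i i hin hin
      rw [hCii, Complex.conj_ofReal, ← Complex.ofReal_add] at this
      have h2 : LamN n lam α i + LamN n lam α i = 0 := by exact_mod_cast this
      linarith
    refine ⟨hLi, fun j hj => ?_⟩
    have hjn : j ≤ n := by omega
    -- C j i = kappa j i
    have hCji : CN n lam c α j i = kappaN n lam α j i := by
      have s1 : (∑ i' ∈ Finset.Icc 1 n,
          if j ≤ i' ∧ i ≤ i' then
            (LamN n lam α i' : ℂ) * ccN c i' j * (starRingEnd ℂ) (ccN c i' i)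
          else 0) = 0 := by
        refine Finset.sum_eq_zero fun i' hi' => ?_
        rcases le_or_gt i i' with hle | hlt
        · have hL : LamN n lam α i' = 0 := by
            rcases eq_or_lt_of_le hle with rfl | h'
            · exact hLi
            · exact (H i' h' (Finset.mem_Icc.1 hi').2).1
          rw [if_pos ⟨by omega, hle⟩, hL]
          simp
        · rw [if_neg (by omega)]
      have s2 : (if j = 0 ∧ i = 0 then (-(alphaN n α 0) : ℂ) else 0) = 0 :=
        if_neg (by omega)
      have s3 : (∑ i' ∈ Finset.Icc 1 n,
          if j < i' ∧ i ≤ i' then kappaN n lam α j i' * (starRingEnd ℂ) (ccN c i' i)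
          else 0) = kappaN n lam α j i := by
        rw [Finset.sum_eq_single_of_mem i himem]
        · rw [if_pos ⟨hj, le_refl i⟩, hcc1 i]
          simp
        · intro i' hi' hne
          rcases le_or_gt i i' with hle | hlt
          · have h' : i < i' := lt_of_le_of_ne hle (Ne.symm hne)
            rw [if_pos ⟨by omega, hle⟩, (H i' h' (Finset.mem_Icc.1 hi').2).2 j (by omega)]
            simp
          · rw [if_neg (by omega)]
      rw [CN, s1, s2, s3, zero_add, zero_add]
    -- C i j = 0
    have hCij : CN n lam c α i j = 0 := by
      have s1 : (∑ i' ∈ Finset.Icc 1 n,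
          if i ≤ i' ∧ j ≤ i' then
            (LamN n lam α i' : ℂ) * ccN c i' i * (starRingEnd ℂ) (ccN c i' j)
          else 0) = 0 := by
        refine Finset.sum_eq_zero fun i' hi' => ?_
        rcases le_or_gt i i' with hle | hlt
        · have hL : LamN n lam α i' = 0 := by
            rcases eq_or_lt_of_le hle with rfl | h'
            · exact hLi
            · exact (H i' h' (Finset.mem_Icc.1 hi').2).1
          rw [if_pos ⟨hle, by omega⟩, hL]
          simp
        · rw [if_neg (by omega)]
      have s2 : (if i = 0 ∧ j = 0 then (-(alphaN n α 0) : ℂ) else 0) = 0 :=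
        if_neg (by omega)
      have s3 : (∑ i' ∈ Finset.Icc 1 n,
          if i < i' ∧ j ≤ i' then kappaN n lam α i i' * (starRingEnd ℂ) (ccN c i' j)
          else 0) = 0 := by
        refine Finset.sum_eq_zero fun i' hi' => ?_
        rcases lt_or_ge i i' with hlt | hle
        · rw [if_pos ⟨hlt, by omega⟩, (H i' hlt (Finset.mem_Icc.1 hi').2).2 i hlt]
          simp
        · rw [if_neg (by omega)]
      rw [CN, s1, s2, s3, add_zero, add_zero]
    have := hC j i hjn hin
    rw [hCji, hCij, map_zero, add_zero] at this
    exact this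
  -- downward induction
  have key : ∀ m i, 1 ≤ i → i ≤ n → n - i ≤ m →
      LamN n lam α i = 0 ∧ ∀ j, j < i → kappaN n lam α j i = 0 := by
    intro m
    induction m with
    | zero =>
      intro i h1 h2 h3
      exact step i h1 h2 (fun i' hi' hi'n => absurd hi' (by omega))
    | succ m ih =>
      intro i h1 h2 h3
      exact step i h1 h2 (fun i' hi' hi'n => ih i' (by omega) hi'n (by omega))
  have hkey : ∀ i, 1 ≤ i → i ≤ n →
      LamN n lam α i = 0 ∧ ∀ j, j < i → kappaN n lam α j i = 0 :=
    fun i h1 h2 => key (n - i) i h1 h2 le_rfl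
  -- the (0,0) equation gives `alphaN 0 = 0`
  have ha0 : alphaN n α 0 = 0 := by
    have hC00 := hC 0 0 (by omega) (by omega)
    have hCN00 : CN n lam c α 0 0 = -((alphaN n α 0 : ℝ) : ℂ) := by
      have s1 : (∑ i' ∈ Finset.Icc 1 n,
          if 0 ≤ i' ∧ 0 ≤ i' then
            (LamN n lam α i' : ℂ) * ccN c i' 0 * (starRingEnd ℂ) (ccN c i' 0)
          else 0) = 0 := by
        refine Finset.sum_eq_zero fun i' hi' => ?_
        have h' := Finset.mem_Icc.1 hi'
        rw [if_pos ⟨Nat.zero_le _, Nat.zero_le _⟩, (hkey i' h'.1 h'.2).1]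
        simp
      have s2 : (if (0:ℕ) = 0 ∧ (0:ℕ) = 0 then (-(alphaN n α 0) : ℂ) else 0)
          = -((alphaN n α 0 : ℝ) : ℂ) := if_pos ⟨rfl, rfl⟩
      have s3 : (∑ i' ∈ Finset.Icc 1 n,
          if 0 < i' ∧ 0 ≤ i' then kappaN n lam α 0 i' * (starRingEnd ℂ) (ccN c i' 0)
          else 0) = 0 := by
        refine Finset.sum_eq_zero fun i' hi' => ?_
        have h' := Finset.mem_Icc.1 hi'
        rw [if_pos ⟨by omega, Nat.zero_le _⟩, (hkey i' h'.1 h'.2).2 0 (by omega)]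
        simp
      rw [CN, s1, s2, s3, zero_add, add_zero]
    rw [hCN00, map_neg, Complex.conj_ofReal] at hC00
    have h2 : (-(alphaN n α 0) + -(alphaN n α 0) : ℝ) = 0 := by exact_mod_cast hC00
    linarith
  -- beta and gamma vanish
  have hbg : ∀ j i, j < i → i ≤ n → betaN n α j i = 0 ∧ gammaN n α j i = 0 := by
    intro j i hj hi
    have hκ := (hkey i (by omega) hi).2 j hj
    rw [kappaN] at hκ
    have hl2 : (-2 * (lam i : ℂ)) ≠ 0 := by
      simp only [ne_eq, mul_eq_zero, neg_eq_zero, OfNat.ofNat_ne_zero, false_or]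
      exact_mod_cast (hlam i hi).ne'
    have hsum : (betaN n α j i : ℂ) + Complex.I * (gammaN n α j i : ℂ) = 0 :=
      (mul_eq_zero.1 hκ).resolve_left hl2
    constructor
    · have := congrArg Complex.re hsum
      simpa using this
    · have := congrArg Complex.im hsum
      simpa using this
  -- conclude
  funext r
  show α r = 0
  rcases r with k | ⟨q, b⟩
  · have hval : α (Sum.inl k) = alphaN n α k.val := by
      rw [alphaN, dif_pos k.isLt, Fin.eta]
    rcases Nat.eq_zero_or_pos k.val with h0 | hpos
    · rw [hval, h0, ha0]
    · have hkn : (k : ℕ) < n := k.isLt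
      have hL := (hkey k.val hpos (le_of_lt hkn)).1
      rw [LamN] at hL
      rw [if_neg (by omega)] at hL
      rw [hval]
      linarith [neg_eq_zero.1 hL]
  · have hq1 : q.1.1.val < q.1.2.val := q.2
    have hq2 : q.1.2.val ≤ n := by have := q.1.2.isLt; omega
    have hbgq := hbg q.1.1.val q.1.2.val hq1 hq2
    cases b with
    | false =>
      have : betaN n α q.1.1.val q.1.2.val = α (Sum.inr (q, false)) := by
        rw [betaN, dif_pos ⟨hq1, hq2⟩]
      rw [← this]
      exact hbgq.1
    | true =>
      have : gammaN n α q.1.1.val q.1.2.val = α (Sum.inr (q, true)) := by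
        rw [gammaN, dif_pos ⟨hq1, hq2⟩]
      rw [← this]
      exact hbgq.2

/-- **Invertibility of the matrix `M` (display (3.1)); main result of Section 4.**
With `Pᵢ(z) = z^{aᵢ} + Σ_{j<i} c_{ij} z^{aⱼ}` (principal powers, `aᵢ = μ₁ + ⋯ + μᵢ`,
`μᵢ > 0`), `D(z) = λ₀ + Σᵢ λᵢ |Pᵢ(z)|²`, consider the vector `Θ(z) ∈ ℝ^{n²+2n}` with
components `((λₙ/λ₀)|Pₙ(z)|² - 1)/D(z)`, `((λₙ/λᵢ)|Pₙ(z)|² - |Pᵢ(z)|²)/D(z)` for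
`i = 1, …, n-1`, and `-2 λᵢ Re(z^{aⱼ} conj(Pᵢ(z)))/D(z)`,
`2 λᵢ Im(z^{aⱼ} conj(Pᵢ(z)))/D(z)` for `0 ≤ j < i ≤ n`.  Then there are points
`p₁, …, p_{n²+2n} ∈ ℂ \ {0}` such that the square matrix
`M = (Θ(p₁), …, Θ(p_{n²+2n}))` is invertible. -/
theorem stmt13 (n : ℕ) (hn : 1 ≤ n)
    (μ : ℕ → ℝ) (hμ : ∀ i, 1 ≤ i → i ≤ n → 0 < μ i)
    (a : ℕ → ℝ) (ha0 : a 0 = 0) (ha : ∀ i, a (i + 1) = a i + μ (i + 1))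
    (lam : ℕ → ℝ) (hlam : ∀ i, i ≤ n → 0 < lam i)
    (c : ℕ → ℕ → ℂ)
    (P : ℂ → ℕ → ℂ)
    (hP : ∀ z k, P z k = z ^ (a k : ℂ) + ∑ j ∈ Finset.range k, c k j * z ^ (a j : ℂ))
    (D : ℂ → ℝ)
    (hD : ∀ z, D z = lam 0 + ∑ i ∈ Finset.Icc 1 n, lam i * ‖P z i‖ ^ 2) :
    ∃ p : TodaIdx n → ℂ,
      (∀ t, p t ≠ 0) ∧
      (Matrix.of (fun r t : TodaIdx n =>
        match r with
        | Sum.inl k =>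
            if (k : ℕ) = 0 then
              (lam n / lam 0 * ‖P (p t) n‖ ^ 2 - 1) / D (p t)
            else
              (lam n / lam (k : ℕ) * ‖P (p t) n‖ ^ 2
                - ‖P (p t) (k : ℕ)‖ ^ 2) / D (p t)
        | Sum.inr (q, bb) =>
            if bb then
              2 * lam (q.1.2 : ℕ) *
                ((p t) ^ (a (q.1.1 : ℕ) : ℂ) * (starRingEnd ℂ) (P (p t) (q.1.2 : ℕ))).im
                / D (p t)
            else
              -2 * lam (q.1.2 : ℕ) *
                ((p t) ^ (a (q.1.1 : ℕ) : ℂ) * (starRingEnd ℂ) (P (p t) (q.1.2 : ℕ))).re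
                / D (p t))).det ≠ 0 := by
  classical
  -- monotonicity of the exponents
  have hmono : ∀ j i : ℕ, j < i → i ≤ n → a j < a i := by
    intro j i hji hin
    induction i with
    | zero => omega
    | succ m ihm =>
      have hstep : a m < a (m + 1) := by
        rw [ha m]
        have := hμ (m + 1) (by omega) hin
        linarith
      rcases Nat.lt_succ_iff_lt_or_eq.1 hji with h' | h'
      · exact lt_trans (ihm h' (by omega)) hstep
      · exact h' ▸ hstep
  have hainj : ∀ j i : ℕ, j ≤ n → i ≤ n → a j = a i → j = i := by
    intro j i hj hi he
    rcases lt_trichotomy j i with h' | h' | h'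
    · exact absurd he (ne_of_lt (hmono j i h' hi))
    · exact h'
    · exact absurd he.symm (ne_of_lt (hmono i j h' hj))
  -- positivity of D
  have hDpos : ∀ z : ℂ, 0 < D z := by
    intro z
    rw [hD]
    have h1 : (0:ℝ) ≤ ∑ i ∈ Finset.Icc 1 n, lam i * ‖P z i‖ ^ 2 :=
      Finset.sum_nonneg fun i hi =>
        mul_nonneg (le_of_lt (hlam i (Finset.mem_Icc.1 hi).2)) (sq_nonneg _)
    have := hlam 0 (Nat.zero_le n)
    linarith
  -- the set of sample points
  set S : Set ℂ := {z | ∃ u θ : ℝ, θ ∈ Set.Ioo (-Real.pi) Real.pi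
    ∧ z = Complex.exp ((u : ℂ) + (θ : ℂ) * Complex.I)} with hS
  -- the component functions
  set gfun : TodaIdx n → ℂ → ℝ := fun r z =>
    match r with
    | Sum.inl k =>
        if (k : ℕ) = 0 then
          (lam n / lam 0 * ‖P z n‖ ^ 2 - 1) / D z
        else
          (lam n / lam (k : ℕ) * ‖P z n‖ ^ 2
            - ‖P z (k : ℕ)‖ ^ 2) / D z
    | Sum.inr (q, bb) =>
        if bb then
          2 * lam (q.1.2 : ℕ) *
            (z ^ (a (q.1.1 : ℕ) : ℂ) * (starRingEnd ℂ) (P z (q.1.2 : ℕ))).im / D z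
        else
          -2 * lam (q.1.2 : ℕ) *
            (z ^ (a (q.1.1 : ℕ) : ℂ) * (starRingEnd ℂ) (P z (q.1.2 : ℕ))).re / D z
    with hgfun
  set numer : TodaIdx n → ℂ → ℝ := fun r z =>
    match r with
    | Sum.inl k =>
        if (k : ℕ) = 0 then
          lam n / lam 0 * ‖P z n‖ ^ 2 - 1
        else
          lam n / lam (k : ℕ) * ‖P z n‖ ^ 2 - ‖P z (k : ℕ)‖ ^ 2
    | Sum.inr (q, bb) =>
        if bb then
          2 * lam (q.1.2 : ℕ) *
            (z ^ (a (q.1.1 : ℕ) : ℂ) * (starRingEnd ℂ) (P z (q.1.2 : ℕ))).im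
        else
          -2 * lam (q.1.2 : ℕ) *
            (z ^ (a (q.1.1 : ℕ) : ℂ) * (starRingEnd ℂ) (P z (q.1.2 : ℕ))).re
    with hnumer
  have hgn : ∀ r z, gfun r z = numer r z / D z := by
    intro r z
    rcases r with k | ⟨q, b⟩
    · by_cases hk : (k : ℕ) = 0 <;> simp [hgfun, hnumer, hk]
    · cases b <;> simp [hgfun, hnumer]
  -- the key linear independence statement
  have hindep : ∀ α : TodaIdx n → ℝ, (∀ z ∈ S, ∑ r, α r * gfun r z = 0) → α = 0 := by
    intro α hα
    -- numerator sums vanish on S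
    have hnum : ∀ z ∈ S, (∑ r, α r * numer r z) = 0 := by
      intro z hz
      have h1 := hα z hz
      have h2 : ∑ r, α r * gfun r z = (∑ r, α r * numer r z) / D z := by
        rw [Finset.sum_div]
        exact Finset.sum_congr rfl fun r _ => by rw [hgn, mul_div_assoc]
      rw [h2] at h1
      exact (div_eq_zero_iff.1 h1).resolve_right (ne_of_gt (hDpos z))
    -- rewrite the numerator sum via the ℕ-indexed form
    have hexp : ∀ z : ℂ, (∑ r, α r * numer r z)
        = (∑ q ∈ (Finset.range (n+1)) ×ˢ (Finset.range (n+1)),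
            CN n lam c α q.1 q.2 *
              (z ^ (a q.1 : ℂ) * (starRingEnd ℂ) (z ^ (a q.2 : ℂ)))).re := by
      intro z
      rw [toda_expand n hn a ha0 lam c α P hP z]
      refine toda_sum_split n (fun r => α r * numer r z)
        (fun k => alphaN n α k * (lam n / lam k * ‖P z n‖ ^ 2
          - (if k = 0 then 1 else ‖P z k‖ ^ 2)))
        (fun j i b => if b then
            gammaN n α j i * (2 * lam i * (z ^ (a j : ℂ) * (starRingEnd ℂ) (P z i)).im)
          else
            betaN n α j i * (-2 * lam i * (z ^ (a j : ℂ) * (starRingEnd ℂ) (P z i)).re))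
        ?_ ?_
      · intro k
        have hαk : α (Sum.inl k) = alphaN n α k.val := by
          rw [alphaN, dif_pos k.isLt, Fin.eta]
        by_cases hk : (k : ℕ) = 0 <;>
          simp only [hnumer, hk, if_true, if_false, hαk]
      · intro q b
        have hq1 : q.1.1.val < q.1.2.val := q.2
        have hq2 : q.1.2.val ≤ n := by have := q.1.2.isLt; omega
        cases b with
        | false =>
          have hβ : betaN n α q.1.1.val q.1.2.val = α (Sum.inr (q, false)) := by
            rw [betaN, dif_pos ⟨hq1, hq2⟩]
          simp [hnumer, ← hβ]
        | true =>
          have hγ : gammaN n α q.1.1.val q.1.2.val = α (Sum.inr (q, true)) := by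
            rw [gammaN, dif_pos ⟨hq1, hq2⟩]
          simp [hnumer, ← hγ]
    -- the complex character sums vanish
    have hchar : ∀ u θ : ℝ, θ ∈ Set.Ioo (-Real.pi) Real.pi →
        ∑ q ∈ (Finset.range (n+1)) ×ˢ (Finset.range (n+1)),
          (CN n lam c α q.1 q.2 + (starRingEnd ℂ) (CN n lam c α q.2 q.1)) *
            Complex.exp (((a q.1 + a q.2 : ℝ) : ℂ) * (u : ℂ)
              + Complex.I * ((a q.1 - a q.2 : ℝ) : ℂ) * (θ : ℂ)) = 0 := by
      intro u θ hθ
      set z : ℂ := Complex.exp ((u : ℂ) + (θ : ℂ) * Complex.I) with hz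
      have hzS : z ∈ S := ⟨u, θ, hθ, rfl⟩
      have hzero : (∑ q ∈ (Finset.range (n+1)) ×ˢ (Finset.range (n+1)),
          CN n lam c α q.1 q.2 *
            (z ^ (a q.1 : ℂ) * (starRingEnd ℂ) (z ^ (a q.2 : ℂ)))).re = 0 := by
        rw [← hexp z]
        exact hnum z hzS
      -- character formula for the powers
      have hpow : ∀ j l : ℕ, z ^ (a j : ℂ) * (starRingEnd ℂ) (z ^ (a l : ℂ))
          = Complex.exp (((a j + a l : ℝ) : ℂ) * (u : ℂ)
              + Complex.I * ((a j - a l : ℝ) : ℂ) * (θ : ℂ)) := by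
        intro j l
        have hlog : Complex.log z = (u : ℂ) + (θ : ℂ) * Complex.I := by
          rw [hz]
          refine Complex.log_exp ?_ ?_ <;>
            simp [Complex.add_im, Complex.mul_im, Complex.ofReal_re, Complex.ofReal_im,
              Complex.I_im, Complex.I_re]
          · exact hθ.1
          · exact le_of_lt hθ.2
        have hcpow : ∀ w : ℝ, z ^ (w : ℂ)
            = Complex.exp (((u : ℂ) + (θ : ℂ) * Complex.I) * (w : ℂ)) := by
          intro w
          rw [Complex.cpow_def_of_ne_zero (by rw [hz]; exact Complex.exp_ne_zero _), hlog]
        rw [hcpow (a j), hcpow (a l), ← Complex.exp_conj, ← Complex.exp_add]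
        congr 1
        simp only [map_mul, map_add, Complex.conj_ofReal, Complex.conj_I]
        push_cast
        ring
      -- conjugation swaps indices
      have hF := hzero
      have hsum2 : ∑ q ∈ (Finset.range (n+1)) ×ˢ (Finset.range (n+1)),
          (CN n lam c α q.1 q.2 + (starRingEnd ℂ) (CN n lam c α q.2 q.1)) *
            (z ^ (a q.1 : ℂ) * (starRingEnd ℂ) (z ^ (a q.2 : ℂ))) = 0 := by
        have hFc : (starRingEnd ℂ) (∑ q ∈ (Finset.range (n+1)) ×ˢ (Finset.range (n+1)),
            CN n lam c α q.1 q.2 * (z ^ (a q.1 : ℂ) * (starRingEnd ℂ) (z ^ (a q.2 : ℂ))))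
            = ∑ q ∈ (Finset.range (n+1)) ×ˢ (Finset.range (n+1)),
              (starRingEnd ℂ) (CN n lam c α q.2 q.1) *
                (z ^ (a q.1 : ℂ) * (starRingEnd ℂ) (z ^ (a q.2 : ℂ))) := by
          rw [map_sum]
          rw [Finset.sum_product, Finset.sum_comm, ← Finset.sum_product']
          refine Finset.sum_congr rfl fun q _ => ?_
          rw [map_mul, map_mul, Complex.conj_conj]
          ring
        have hadd : (∑ q ∈ (Finset.range (n+1)) ×ˢ (Finset.range (n+1)),
            CN n lam c α q.1 q.2 * (z ^ (a q.1 : ℂ) * (starRingEnd ℂ) (z ^ (a q.2 : ℂ))))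
            + (starRingEnd ℂ) (∑ q ∈ (Finset.range (n+1)) ×ˢ (Finset.range (n+1)),
              CN n lam c α q.1 q.2 * (z ^ (a q.1 : ℂ) * (starRingEnd ℂ) (z ^ (a q.2 : ℂ))))
            = 0 := by
          rw [Complex.add_conj, hF]
          simp
        rw [hFc, ← Finset.sum_add_distrib] at hadd
        rw [← hadd]
        refine Finset.sum_congr rfl fun q _ => ?_
        ring
      rw [← hsum2]
      refine Finset.sum_congr rfl fun q _ => ?_
      rw [hpow q.1 q.2]
    -- linear independence of the characters
    have hCzero : ∀ q ∈ (Finset.range (n+1)) ×ˢ (Finset.range (n+1)),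
        CN n lam c α q.1 q.2 + (starRingEnd ℂ) (CN n lam c α q.2 q.1) = 0 := by
      refine indep_exp_two _ (fun q => a q.1 + a q.2) (fun q => a q.1 - a q.2) ?_ _ ?_
      · intro q hq q' hq' he
        simp only [Finset.coe_product, Set.mem_prod, Finset.mem_coe, Finset.mem_range]
          at hq hq'
        rw [Prod.mk.injEq] at he
        have he1 : a q.1 + a q.2 = a q'.1 + a q'.2 := he.1
        have he2 : a q.1 - a q.2 = a q'.1 - a q'.2 := he.2
        have h1 : a q.1 = a q'.1 := by linarith
        have h2 : a q.2 = a q'.2 := by linarith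
        have e1 : q.1 = q'.1 := hainj _ _ (by omega) (by omega) h1
        have e2 : q.2 = q'.2 := hainj _ _ (by omega) (by omega) h2
        exact Prod.ext e1 e2
      · intro u θ hθ
        exact hchar u θ hθ
    refine toda_alpha_eq_zero n hn lam hlam c α fun j l hj hl => ?_
    exact hCzero (j, l) (Finset.mem_product.2 ⟨Finset.mem_range.2 (by omega),
      Finset.mem_range.2 (by omega)⟩)
  obtain ⟨p, hpS, hdet⟩ := exists_points_det_ne_zero S gfun hindep
  refine ⟨p, ?_, ?_⟩
  · intro t
    obtain ⟨u, θ, _, hz⟩ := hpS t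
    rw [hz]
    exact Complex.exp_ne_zero _
  · exact hdet
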